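/- arXiv:2004.04589 — 3 statements merged into one kernel-verified Lean document; each statement's English description precedes it below -/
import Mathlib

section
/- (Hardy inequality with degenerate weight) Let I = (0,1), γ > 1, ρ̄(x) = ((γ-1)/γ · (1-x))^(1/(γ-1)), and let β > -(γ-1) be a real number. Then there exists a constant C₁ depending only on γ and β such that for all w ∈ H¹_loc(I) with ∫_I ρ̄^(β+2(γ-1))·(w² + w_x²) dx < ∞, one has ∫_I ρ̄^β w² dx ≤ C₁ ∫_I ρ̄^(β+2(γ-1))·(w² + w_x²) dx. -/
open Real MeasureTheory Set

private lemma amgm2 {s : ℝ} (u v : ℝ) (hs : 0 < s) : 2 * (u * v) ≤ s * u ^ 2 + 1 / s * v ^ 2 := by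
  have h := div_nonneg (sq_nonneg (s * u - v)) hs.le
  have he : (s * u - v) ^ 2 / s = s * u ^ 2 - 2 * (u * v) + 1 / s * v ^ 2 := by
    field_simp
    ring
  rw [he] at h
  linarith

private lemma hasDerivAt_G (p : ℝ) {w : ℝ → ℝ} (hw : DifferentiableOn ℝ w (Set.Ioo 0 1))
    {x : ℝ} (hx : x ∈ Set.Ioo (0:ℝ) 1) :
    HasDerivAt (fun y => (1 - y) ^ p * w y ^ 2)
      (-(p * (1 - x) ^ (p - 1) * w x ^ 2) + (1 - x) ^ p * (2 * w x * deriv w x)) x := by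
  have h1x : (0:ℝ) < 1 - x := by linarith [hx.2]
  have hwx : HasDerivAt w (deriv w x) x :=
    (hw.differentiableAt (isOpen_Ioo.mem_nhds hx)).hasDerivAt
  have hsq : HasDerivAt (fun y => w y ^ 2) (2 * w x * deriv w x) x := by
    refine (hwx.fun_pow 2).congr_deriv ?_
    norm_num
  have hbase : HasDerivAt (fun y : ℝ => 1 - y) (-1) x := by
    simpa using (hasDerivAt_id x).const_sub 1
  have hpow : HasDerivAt (fun y : ℝ => (1 - y) ^ p) (-(p * (1 - x) ^ (p - 1))) x := by
    have h := (Real.hasDerivAt_rpow_const (x := 1 - x) (p := p) (Or.inl h1x.ne')).comp x hbase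
    refine h.congr_deriv ?_
    ring
  have := hpow.mul hsq
  refine this.congr_deriv ?_
  ring

set_option maxHeartbeats 2000000 in
private lemma hardy_aux {a : ℝ} (ha : -1 < a) {w : ℝ → ℝ}
    (hw : DifferentiableOn ℝ w (Set.Ioo 0 1))
    (hJ : IntegrableOn (fun x => (1 - x) ^ (a + 2) * (w x ^ 2 + deriv w x ^ 2)) (Set.Ioo 0 1))
    (hf : IntegrableOn (fun x => (1 - x) ^ a * w x ^ 2) (Set.Ioo 0 1)) :
    ∫ x in Set.Ioo (0:ℝ) 1, (1 - x) ^ a * w x ^ 2 ≤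
      (8 + 8 * (4:ℝ) ^ (a + 2) / (a + 1) + 4 / (a + 1) ^ 2) *
        ∫ x in Set.Ioo (0:ℝ) 1, (1 - x) ^ (a + 2) * (w x ^ 2 + deriv w x ^ 2) := by
  have ha1 : (0:ℝ) < a + 1 := by linarith
  set J := ∫ x in Set.Ioo (0:ℝ) 1, (1 - x) ^ (a + 2) * (w x ^ 2 + deriv w x ^ 2) with hJdef
  have hgJ_nonneg : ∀ x ∈ Set.Ioo (0:ℝ) 1,
      0 ≤ (1 - x) ^ (a + 2) * (w x ^ 2 + deriv w x ^ 2) := fun x hx =>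
    mul_nonneg (Real.rpow_nonneg (by linarith [hx.2]) _) (by positivity)
  have hJ0 : 0 ≤ J := setIntegral_nonneg measurableSet_Ioo hgJ_nonneg
  -- measurability facts
  have hwm : AEStronglyMeasurable w (volume.restrict (Set.Ioo (0:ℝ) 1)) :=
    hw.continuousOn.aestronglyMeasurable measurableSet_Ioo
  have hw2m : AEStronglyMeasurable (fun x => w x ^ 2) (volume.restrict (Set.Ioo (0:ℝ) 1)) := by
    simpa [pow_two] using hwm.fun_mul hwm
  have hw'm : AEStronglyMeasurable (fun x => deriv w x ^ 2) (volume.restrict (Set.Ioo (0:ℝ) 1)) := by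
    have h := (measurable_deriv w).aestronglyMeasurable (μ := volume.restrict (Set.Ioo (0:ℝ) 1))
    simpa [pow_two] using h.fun_mul h
  have hpm : ∀ p : ℝ, AEStronglyMeasurable (fun x : ℝ => (1 - x) ^ p)
      (volume.restrict (Set.Ioo (0:ℝ) 1)) := by
    intro p
    refine ((continuousOn_const.sub continuousOn_id).rpow_const ?_).aestronglyMeasurable
      measurableSet_Ioo
    intro x hx
    exact Or.inl (sub_ne_zero_of_ne hx.2.ne')
  -- g2, g3 integrable
  have hexpand : ∀ x : ℝ, (1 - x) ^ (a + 2) * (w x ^ 2 + deriv w x ^ 2)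
      = (1 - x) ^ (a + 2) * w x ^ 2 + (1 - x) ^ (a + 2) * deriv w x ^ 2 := fun x => by ring
  have hg2 : IntegrableOn (fun x => (1 - x) ^ (a + 2) * w x ^ 2) (Set.Ioo (0:ℝ) 1) := by
    refine hJ.mono' ((hpm (a + 2)).mul hw2m) ?_
    refine (ae_restrict_iff' measurableSet_Ioo).2 (ae_of_all _ fun x hx => ?_)
    have h1 : (0:ℝ) ≤ (1 - x) ^ (a + 2) := Real.rpow_nonneg (by linarith [hx.2]) _
    rw [Real.norm_eq_abs, abs_of_nonneg (mul_nonneg h1 (sq_nonneg _)), hexpand]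
    nlinarith [mul_nonneg h1 (sq_nonneg (deriv w x))]
  have hg3 : IntegrableOn (fun x => (1 - x) ^ (a + 2) * deriv w x ^ 2) (Set.Ioo (0:ℝ) 1) := by
    refine hJ.mono' ((hpm (a + 2)).mul hw'm) ?_
    refine (ae_restrict_iff' measurableSet_Ioo).2 (ae_of_all _ fun x hx => ?_)
    have h1 : (0:ℝ) ≤ (1 - x) ^ (a + 2) := Real.rpow_nonneg (by linarith [hx.2]) _
    rw [Real.norm_eq_abs, abs_of_nonneg (mul_nonneg h1 (sq_nonneg _)), hexpand]
    nlinarith [mul_nonneg h1 (sq_nonneg (w x))]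
  have hg3J : ∫ x in Set.Ioo (0:ℝ) 1, (1 - x) ^ (a + 2) * deriv w x ^ 2 ≤ J := by
    refine setIntegral_mono_on hg3 hJ measurableSet_Ioo fun x hx => ?_
    have h1 : (0:ℝ) ≤ (1 - x) ^ (a + 2) := Real.rpow_nonneg (by linarith [hx.2]) _
    rw [hexpand]
    nlinarith [mul_nonneg h1 (sq_nonneg (w x))]
  -- minimum point
  have hsub1 : Set.Icc (3/8:ℝ) (5/8) ⊆ Set.Ioo (0:ℝ) 1 := fun x hx =>
    ⟨by linarith [hx.1], by linarith [hx.2]⟩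
  have hcw : ContinuousOn (fun x => w x ^ 2) (Set.Icc (3/8:ℝ) (5/8)) :=
    (hw.continuousOn.mono hsub1).pow 2
  obtain ⟨x₀, hx₀mem, hx₀min⟩ :=
    isCompact_Icc.exists_isMinOn (Set.nonempty_Icc.2 (by norm_num)) hcw
  have hx₀a : (3/8:ℝ) ≤ x₀ := hx₀mem.1
  have hx₀b : x₀ ≤ (5/8:ℝ) := hx₀mem.2
  have hx₀I : x₀ ∈ Set.Ioo (0:ℝ) 1 := hsub1 hx₀mem
  -- bound on w x₀ ^ 2
  have hw2cont : ContinuousOn (fun x => w x ^ 2) (Set.Icc (1/4:ℝ) (3/4)) :=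
    (hw.continuousOn.mono (fun x hx => ⟨by linarith [hx.1], by linarith [hx.2]⟩)).pow 2
  have hw2int : IntegrableOn (fun x => w x ^ 2) (Set.Ioo (1/4:ℝ) (3/4)) :=
    hw2cont.integrableOn_Icc.mono_set Set.Ioo_subset_Icc_self
  have step1 : (1/4:ℝ) * w x₀ ^ 2 ≤ ∫ x in Set.Icc (3/8:ℝ) (5/8), w x ^ 2 := by
    have h1 : ∫ _x in Set.Icc (3/8:ℝ) (5/8), w x₀ ^ 2 ≤ ∫ x in Set.Icc (3/8:ℝ) (5/8), w x ^ 2 := by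
      refine setIntegral_mono_on ?_
        (hw2int.mono_set (fun x hx => ⟨by linarith [hx.1], by linarith [hx.2]⟩))
        measurableSet_Icc (fun x hx => hx₀min hx)
      exact integrableOn_const (by rw [Real.volume_Icc]; exact ENNReal.ofReal_ne_top)
    rwa [setIntegral_const, Real.volume_real_Icc, smul_eq_mul,
      show (5/8 - 3/8 : ℝ) = 1/4 by norm_num, max_eq_left (by norm_num : (0:ℝ) ≤ 1/4)] at h1
  have step2 : ∫ x in Set.Icc (3/8:ℝ) (5/8), w x ^ 2 ≤ ∫ x in Set.Ioo (1/4:ℝ) (3/4), w x ^ 2 := by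
    refine setIntegral_mono_set hw2int
      ((ae_restrict_iff' measurableSet_Ioo).2 (ae_of_all _ fun x _ => sq_nonneg _)) ?_
    exact HasSubset.Subset.eventuallyLE (fun x hx => ⟨by linarith [hx.1], by linarith [hx.2]⟩)
  have hsub' : Set.Ioo (1/4:ℝ) (3/4) ⊆ Set.Ioo (0:ℝ) 1 := fun x hx =>
    ⟨by linarith [hx.1], by linarith [hx.2]⟩
  have step3 : ∫ x in Set.Ioo (1/4:ℝ) (3/4), w x ^ 2
      ≤ (4:ℝ) ^ (a + 2) * ∫ x in Set.Ioo (1/4:ℝ) (3/4), (1 - x) ^ (a + 2) * w x ^ 2 := by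
    rw [← integral_const_mul]
    refine setIntegral_mono_on hw2int ((hg2.mono_set hsub').const_mul _) measurableSet_Ioo
      fun x hx => ?_
    have h14 : ((1:ℝ)/4) ^ (a + 2) ≤ (1 - x) ^ (a + 2) :=
      Real.rpow_le_rpow (by norm_num) (by linarith [hx.2]) (by linarith)
    have hq : (4:ℝ) ^ (a + 2) * ((1:ℝ)/4) ^ (a + 2) = 1 := by
      rw [← Real.mul_rpow (by norm_num) (by norm_num)]
      norm_num
    calc w x ^ 2 = (4:ℝ) ^ (a + 2) * (((1:ℝ)/4) ^ (a + 2) * w x ^ 2) := by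
          rw [← mul_assoc, hq, one_mul]
      _ ≤ (4:ℝ) ^ (a + 2) * ((1 - x) ^ (a + 2) * w x ^ 2) :=
          mul_le_mul_of_nonneg_left (mul_le_mul_of_nonneg_right h14 (sq_nonneg _))
            (Real.rpow_nonneg (by norm_num) _)
  have step4 : ∫ x in Set.Ioo (1/4:ℝ) (3/4), (1 - x) ^ (a + 2) * w x ^ 2 ≤ J := by
    have h1 : ∫ x in Set.Ioo (1/4:ℝ) (3/4), (1 - x) ^ (a + 2) * w x ^ 2
        ≤ ∫ x in Set.Ioo (0:ℝ) 1, (1 - x) ^ (a + 2) * w x ^ 2 := by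
      refine setIntegral_mono_set hg2 ((ae_restrict_iff' measurableSet_Ioo).2
        (ae_of_all _ fun x hx => mul_nonneg (Real.rpow_nonneg (by linarith [hx.2]) _)
          (sq_nonneg _))) hsub'.eventuallyLE
    have h2 : ∫ x in Set.Ioo (0:ℝ) 1, (1 - x) ^ (a + 2) * w x ^ 2 ≤ J := by
      refine setIntegral_mono_on hg2 hJ measurableSet_Ioo fun x hx => ?_
      have h1' : (0:ℝ) ≤ (1 - x) ^ (a + 2) := Real.rpow_nonneg (by linarith [hx.2]) _
      rw [hexpand]
      nlinarith [mul_nonneg h1' (sq_nonneg (deriv w x))]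
    linarith
  have h4pow : (0:ℝ) ≤ (4:ℝ) ^ (a + 2) := Real.rpow_nonneg (by norm_num) _
  have hwx0 : w x₀ ^ 2 ≤ 4 * (4:ℝ) ^ (a + 2) * J := by
    have h5 := mul_le_mul_of_nonneg_left step4 h4pow
    nlinarith
  -- left piece
  have hIoo0x : Set.Ioo (0:ℝ) x₀ ⊆ Set.Ioo (0:ℝ) 1 := fun x hx => ⟨hx.1, by linarith [hx.2]⟩
  have hleft : ∫ x in Set.Ioo (0:ℝ) x₀, (1 - x) ^ a * w x ^ 2 ≤ 8 * J := by
    have hpt : ∀ x ∈ Set.Ioo (0:ℝ) x₀,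
        (1 - x) ^ a * w x ^ 2 ≤ 8 * ((1 - x) ^ (a + 2) * (w x ^ 2 + deriv w x ^ 2)) := by
      intro x hx
      have h1x : (0:ℝ) < 1 - x := by nlinarith [hx.2]
      have h38 : (3/8:ℝ) ≤ 1 - x := by linarith [hx.2]
      have hsplit : (1 - x) ^ (a + 2) = (1 - x) ^ a * (1 - x) ^ (2:ℕ) := by
        rw [Real.rpow_add h1x, Real.rpow_two]
      rw [hsplit]
      have hA : (0:ℝ) ≤ (1 - x) ^ a := Real.rpow_nonneg h1x.le _
      have h8 : (0:ℝ) ≤ 8 * (1 - x) ^ (2:ℕ) - 1 := by nlinarith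
      nlinarith [mul_nonneg (mul_nonneg hA (sq_nonneg (w x))) h8,
        mul_nonneg (mul_nonneg hA (sq_nonneg (1 - x))) (sq_nonneg (deriv w x))]
    calc ∫ x in Set.Ioo (0:ℝ) x₀, (1 - x) ^ a * w x ^ 2
        ≤ ∫ x in Set.Ioo (0:ℝ) x₀, 8 * ((1 - x) ^ (a + 2) * (w x ^ 2 + deriv w x ^ 2)) :=
          setIntegral_mono_on (hf.mono_set hIoo0x) ((hJ.mono_set hIoo0x).const_mul _)
            measurableSet_Ioo hpt
      _ = 8 * ∫ x in Set.Ioo (0:ℝ) x₀, (1 - x) ^ (a + 2) * (w x ^ 2 + deriv w x ^ 2) :=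
          integral_const_mul _ _
      _ ≤ 8 * J := by
          refine mul_le_mul_of_nonneg_left ?_ (by norm_num)
          exact setIntegral_mono_set hJ ((ae_restrict_iff' measurableSet_Ioo).2
            (ae_of_all _ hgJ_nonneg)) hIoo0x.eventuallyLE
  -- pointwise AM-GM bound for the cross term
  have hptw : ∀ x ∈ Set.Ioo (0:ℝ) 1,
      ‖(1 - x) ^ (a + 1) * (2 * w x * deriv w x)‖ ≤
        (a + 1) / 2 * ((1 - x) ^ a * w x ^ 2)
          + 1 / ((a + 1) / 2) * ((1 - x) ^ (a + 2) * deriv w x ^ 2) := by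
    intro x hx
    have h1x : (0:ℝ) < 1 - x := by linarith [hx.2]
    have hu : ((1 - x) ^ (a/2) * |w x|) ^ 2 = (1 - x) ^ a * w x ^ 2 := by
      rw [mul_pow, sq_abs, ← Real.rpow_two, ← Real.rpow_mul h1x.le, show a/2*2 = a by ring]
    have hv : ((1 - x) ^ ((a+2)/2) * |deriv w x|) ^ 2 = (1 - x) ^ (a + 2) * deriv w x ^ 2 := by
      rw [mul_pow, sq_abs, ← Real.rpow_two, ← Real.rpow_mul h1x.le,
        show (a+2)/2*2 = a + 2 by ring]
    have huv : (1 - x) ^ (a/2) * (1 - x) ^ ((a+2)/2) = (1 - x) ^ (a + 1) := by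
      rw [← Real.rpow_add h1x]
      congr 1
      ring
    have hs : (0:ℝ) < (a + 1) / 2 := by linarith
    have hkey := amgm2 ((1 - x) ^ (a/2) * |w x|) ((1 - x) ^ ((a+2)/2) * |deriv w x|) hs
    rw [hu, hv] at hkey
    calc ‖(1 - x) ^ (a + 1) * (2 * w x * deriv w x)‖
        = 2 * (((1 - x) ^ (a/2) * |w x|) * ((1 - x) ^ ((a+2)/2) * |deriv w x|)) := by
          rw [Real.norm_eq_abs, abs_mul, abs_of_nonneg (Real.rpow_nonneg h1x.le _),
            abs_mul, abs_mul, abs_two, ← huv]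
          ring
      _ ≤ _ := hkey
  -- cross term integrable
  have hdom : IntegrableOn (fun x => (a + 1) / 2 * ((1 - x) ^ a * w x ^ 2)
      + 1 / ((a + 1) / 2) * ((1 - x) ^ (a + 2) * deriv w x ^ 2)) (Set.Ioo (0:ℝ) 1) :=
    (hf.const_mul _).add (hg3.const_mul _)
  have hw'm0 : AEStronglyMeasurable (deriv w) (volume.restrict (Set.Ioo (0:ℝ) 1)) :=
    (measurable_deriv w).aestronglyMeasurable
  have hh : IntegrableOn (fun x => (1 - x) ^ (a + 1) * (2 * w x * deriv w x))
      (Set.Ioo (0:ℝ) 1) := by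
    refine hdom.mono' ((hpm (a + 1)).mul ((aestronglyMeasurable_const.mul hwm).mul hw'm0)) ?_
    exact (ae_restrict_iff' measurableSet_Ioo).2 (ae_of_all _ hptw)
  -- Hardy estimate on (x₀, y) for every y < 1
  have key : ∀ y ∈ Set.Ioo x₀ 1, ∫ x in Set.Ioo x₀ y, (1 - x) ^ a * w x ^ 2 ≤
      2 / (a + 1) * w x₀ ^ 2 + 4 / (a + 1) ^ 2 * J := by
    intro y hy
    have hx₀y : x₀ ≤ y := hy.1.le
    have huIcc : Set.uIcc x₀ y ⊆ Set.Ioo (0:ℝ) 1 := by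
      rw [Set.uIcc_of_le hx₀y]
      exact fun x hx => ⟨by linarith [hx.1, hx₀I.1], by linarith [hx.2, hy.2]⟩
    have hfI : IntervalIntegrable (fun x => (1 - x) ^ a * w x ^ 2) volume x₀ y :=
      (hf.mono_set huIcc).intervalIntegrable
    have hhI : IntervalIntegrable (fun x => (1 - x) ^ (a + 1) * (2 * w x * deriv w x))
        volume x₀ y := (hh.mono_set huIcc).intervalIntegrable
    have hg3I : IntervalIntegrable (fun x => (1 - x) ^ (a + 2) * deriv w x ^ 2) volume x₀ y :=
      (hg3.mono_set huIcc).intervalIntegrable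
    have hnegI : IntervalIntegrable (fun x => -((a + 1) * (1 - x) ^ a * w x ^ 2)) volume x₀ y := by
      have := (hfI.const_mul (a + 1)).neg
      simpa [mul_assoc, Pi.neg_def] using this
    have hderiv : ∀ x ∈ Set.uIcc x₀ y, HasDerivAt (fun z => (1 - z) ^ (a + 1) * w z ^ 2)
        (-((a + 1) * (1 - x) ^ a * w x ^ 2)
          + (1 - x) ^ (a + 1) * (2 * w x * deriv w x)) x := by
      intro x hx
      have h := hasDerivAt_G (a + 1) hw (huIcc hx)
      rwa [show a + 1 - 1 = a by ring] at h
    have hFTC := intervalIntegral.integral_eq_sub_of_hasDerivAt hderiv (hnegI.add hhI)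
    rw [intervalIntegral.integral_add hnegI hhI] at hFTC
    have hneg : ∫ x in x₀..y, -((a + 1) * (1 - x) ^ a * w x ^ 2)
        = -((a + 1) * ∫ x in x₀..y, (1 - x) ^ a * w x ^ 2) := by
      rw [intervalIntegral.integral_neg]
      congr 1
      simp only [mul_assoc]
      exact intervalIntegral.integral_const_mul _ _
    rw [hneg] at hFTC
    have hGy : (0:ℝ) ≤ (1 - y) ^ (a + 1) * w y ^ 2 :=
      mul_nonneg (Real.rpow_nonneg (by linarith [hy.2]) _) (sq_nonneg _)
    have hGx₀ : (1 - x₀) ^ (a + 1) * w x₀ ^ 2 ≤ w x₀ ^ 2 := by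
      have : (1 - x₀) ^ (a + 1) ≤ 1 :=
        Real.rpow_le_one (by linarith) (by linarith) (by linarith)
      nlinarith [sq_nonneg (w x₀)]
    -- cross term integral bound
    have hcross : ∫ x in x₀..y, (1 - x) ^ (a + 1) * (2 * w x * deriv w x)
        ≤ (a + 1) / 2 * (∫ x in x₀..y, (1 - x) ^ a * w x ^ 2)
          + 1 / ((a + 1) / 2) * ∫ x in x₀..y, (1 - x) ^ (a + 2) * deriv w x ^ 2 := by
      have h1 : ∫ x in x₀..y, (1 - x) ^ (a + 1) * (2 * w x * deriv w x)
          ≤ ∫ x in x₀..y, ((a + 1) / 2 * ((1 - x) ^ a * w x ^ 2)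
            + 1 / ((a + 1) / 2) * ((1 - x) ^ (a + 2) * deriv w x ^ 2)) := by
        refine intervalIntegral.integral_mono_on hx₀y hhI
          ((hfI.const_mul _).add (hg3I.const_mul _)) fun x hx => ?_
        have hx' : x ∈ Set.Ioo (0:ℝ) 1 := huIcc (by rwa [Set.uIcc_of_le hx₀y])
        exact le_trans (le_abs_self _) (hptw x hx')
      rwa [intervalIntegral.integral_add (hfI.const_mul _) (hg3I.const_mul _),
        intervalIntegral.integral_const_mul, intervalIntegral.integral_const_mul] at h1
    -- g3 interval integral ≤ J
    have hIg3 : ∫ x in x₀..y, (1 - x) ^ (a + 2) * deriv w x ^ 2 ≤ J := by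
      rw [intervalIntegral.integral_of_le hx₀y, integral_Ioc_eq_integral_Ioo]
      have h1 : ∫ x in Set.Ioo x₀ y, (1 - x) ^ (a + 2) * deriv w x ^ 2
          ≤ ∫ x in Set.Ioo (0:ℝ) 1, (1 - x) ^ (a + 2) * deriv w x ^ 2 := by
        refine setIntegral_mono_set hg3 ((ae_restrict_iff' measurableSet_Ioo).2
          (ae_of_all _ fun x hx => mul_nonneg (Real.rpow_nonneg (by linarith [hx.2]) _)
            (sq_nonneg _))) ?_
        have hss : Set.Ioo x₀ y ⊆ Set.Ioo (0:ℝ) 1 := fun x hx =>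
          ⟨by linarith [hx.1, hx₀I.1], by linarith [hx.2, hy.2]⟩
        exact hss.eventuallyLE
      linarith [hg3J]
    set If := ∫ x in x₀..y, (1 - x) ^ a * w x ^ 2 with hIf
    have hmain : (a + 1) / 2 * If ≤ w x₀ ^ 2 + 2 / (a + 1) * J := by
      have h1d : 1 / ((a + 1) / 2) = 2 / (a + 1) := one_div_div _ _
      rw [h1d] at hcross
      have hc2 : (0:ℝ) < 2 / (a + 1) := by positivity
      nlinarith [hcross, hIg3, hFTC, hGy, hGx₀]
    have hfin : If ≤ 2 / (a + 1) * w x₀ ^ 2 + 4 / (a + 1) ^ 2 * J := by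
      have hc2 : (0:ℝ) < 2 / (a + 1) := by positivity
      have h4 := mul_le_mul_of_nonneg_left hmain hc2.le
      have he : 2 / (a + 1) * ((a + 1) / 2 * If) = If := by
        field_simp
      rw [he] at h4
      calc If ≤ 2 / (a + 1) * (w x₀ ^ 2 + 2 / (a + 1) * J) := h4
        _ = 2 / (a + 1) * w x₀ ^ 2 + 4 / (a + 1) ^ 2 * J := by
          field_simp
          ring
    rw [hIf, intervalIntegral.integral_of_le hx₀y, integral_Ioc_eq_integral_Ioo] at hfin
    exact hfin
  -- limit: integral over Ioo x₀ 1
  have hIoox1 : Set.Ioo x₀ 1 ⊆ Set.Ioo (0:ℝ) 1 := fun x hx => ⟨by linarith [hx.1, hx₀I.1], hx.2⟩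
  have hright : ∫ x in Set.Ioo x₀ 1, (1 - x) ^ a * w x ^ 2 ≤
      2 / (a + 1) * w x₀ ^ 2 + 4 / (a + 1) ^ 2 * J := by
    have h1x₀ : (0:ℝ) < 1 - x₀ := by linarith [hx₀I.2]
    set φ : ℕ → Set ℝ := fun n => Set.Ioo x₀ (1 - (1 - x₀) / (n + 2)) with hφ
    have hyn : ∀ n : ℕ, (1 - (1 - x₀) / (n + 2)) ∈ Set.Ioo x₀ 1 := by
      intro n
      have hn2 : (1:ℝ) < (n:ℝ) + 2 := by
        have := Nat.cast_nonneg (α := ℝ) n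
        linarith
      have hlt : (1 - x₀) / ((n:ℝ) + 2) < 1 - x₀ := div_lt_self h1x₀ hn2
      have hpos : (0:ℝ) < (1 - x₀) / ((n:ℝ) + 2) := div_pos h1x₀ (by linarith)
      exact ⟨by linarith, by linarith⟩
    have hmono : Monotone φ := by
      intro m n hmn
      apply Set.Ioo_subset_Ioo le_rfl
      have h2 : (1 - x₀) / ((n:ℝ) + 2) ≤ (1 - x₀) / ((m:ℝ) + 2) := by
        apply div_le_div_of_nonneg_left h1x₀.le (by positivity)
        have : (m:ℝ) ≤ (n:ℝ) := Nat.cast_le.2 hmn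
        linarith
      linarith
    have hunion : ⋃ n, φ n = Set.Ioo x₀ 1 := by
      ext x
      simp only [hφ, Set.mem_iUnion, Set.mem_Ioo]
      constructor
      · rintro ⟨n, h1, h2⟩
        exact ⟨h1, lt_of_lt_of_le h2 (by linarith [(hyn n).2])⟩
      · rintro ⟨h1, h2⟩
        have h1x : (0:ℝ) < 1 - x := by linarith
        obtain ⟨n, hn⟩ := exists_nat_gt ((1 - x₀) / (1 - x))
        refine ⟨n, h1, ?_⟩
        rw [div_lt_iff₀ h1x] at hn
        have hkey : (1 - x₀) / ((n:ℝ) + 2) < 1 - x := by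
          rw [div_lt_iff₀ (by positivity)]
          nlinarith [h1x]
        linarith
    have hint : IntegrableOn (fun x => (1 - x) ^ a * w x ^ 2) (⋃ n, φ n) := by
      rw [hunion]
      exact hf.mono_set hIoox1
    have htend := tendsto_setIntegral_of_monotone (fun n => measurableSet_Ioo) hmono hint
    rw [hunion] at htend
    refine le_of_tendsto htend (Filter.Eventually.of_forall fun n => ?_)
    exact key _ (hyn n)
  -- combine
  have hsplit2 : ∫ x in Set.Ioo (0:ℝ) 1, (1 - x) ^ a * w x ^ 2 =
      (∫ x in Set.Ioo (0:ℝ) x₀, (1 - x) ^ a * w x ^ 2)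
        + ∫ x in Set.Ioo x₀ 1, (1 - x) ^ a * w x ^ 2 := by
    have hd : Disjoint (Set.Ioo (0:ℝ) x₀) (Set.Ico x₀ 1) := by
      rw [Set.disjoint_left]
      rintro x ⟨_, h2⟩ ⟨h3, _⟩
      linarith
    have hu : Set.Ioo (0:ℝ) 1 = Set.Ioo 0 x₀ ∪ Set.Ico x₀ 1 :=
      (Set.Ioo_union_Ico_eq_Ioo hx₀I.1 hx₀I.2.le).symm
    have hIco : Set.Ico x₀ 1 ⊆ Set.Ioo (0:ℝ) 1 := fun x hx =>
      ⟨by linarith [hx.1, hx₀I.1], hx.2⟩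
    rw [hu, setIntegral_union hd measurableSet_Ico (hf.mono_set hIoo0x) (hf.mono_set hIco)]
    congr 1
    exact (setIntegral_congr_set Ioo_ae_eq_Ico).symm
  have hq2 : 2 / (a + 1) * w x₀ ^ 2 ≤ 2 / (a + 1) * (4 * 4 ^ (a + 2) * J) :=
    mul_le_mul_of_nonneg_left hwx0 (by positivity)
  rw [hsplit2]
  have hfinal : 8 * J + (2 / (a + 1) * (4 * 4 ^ (a + 2) * J) + 4 / (a + 1) ^ 2 * J)
      = (8 + 8 * (4:ℝ) ^ (a + 2) / (a + 1) + 4 / (a + 1) ^ 2) * J := by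
    field_simp
    ring
  linarith [hleft, hright, hq2]


theorem hardy_inequality (γ β : ℝ) (hγ : 1 < γ) (hβ : -(γ - 1) < β)
    (ρ : ℝ → ℝ)
    (hρ : ∀ x, ρ x = ((γ - 1) / γ * (1 - x)) ^ (1 / (γ - 1))) :
    ∃ C₁ : ℝ, 0 < C₁ ∧
      ∀ w : ℝ → ℝ, DifferentiableOn ℝ w (Set.Ioo 0 1) →
        IntegrableOn
          (fun x => ρ x ^ (β + 2 * (γ - 1)) * ((w x) ^ 2 + (deriv w x) ^ 2))
          (Set.Ioo 0 1) →
        ∫ x in Set.Ioo (0 : ℝ) 1, ρ x ^ β * (w x) ^ 2 ≤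
          C₁ * ∫ x in Set.Ioo (0 : ℝ) 1,
            ρ x ^ (β + 2 * (γ - 1)) * ((w x) ^ 2 + (deriv w x) ^ 2) := by
  have hγ1 : (0:ℝ) < γ - 1 := by linarith
  have hγ0 : (0:ℝ) < γ := by linarith
  set c := (γ - 1) / γ with hcdef
  have hcpos : 0 < c := div_pos hγ1 hγ0
  set a := β / (γ - 1) with hadef
  have ha : -1 < a := by
    rw [hadef, lt_div_iff₀ hγ1]
    linarith
  have ha1 : (0:ℝ) < a + 1 := by linarith
  have hexp : (β + 2 * (γ - 1)) / (γ - 1) = a + 2 := by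
    rw [hadef]
    field_simp
  have key1 : ∀ x ∈ Set.Ioo (0:ℝ) 1, ∀ s : ℝ,
      ρ x ^ s = c ^ (s / (γ - 1)) * (1 - x) ^ (s / (γ - 1)) := by
    intro x hx s
    rw [hρ x, ← Real.rpow_mul (mul_nonneg hcpos.le (by linarith [hx.2])),
      show 1 / (γ - 1) * s = s / (γ - 1) by ring,
      Real.mul_rpow hcpos.le (by linarith [hx.2])]
  have hC : (0:ℝ) < 8 + 8 * (4:ℝ) ^ (a + 2) / (a + 1) + 4 / (a + 1) ^ 2 := by
    have h2 : (0:ℝ) < (4:ℝ) ^ (a + 2) := Real.rpow_pos_of_pos (by norm_num) _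
    have h3 : (0:ℝ) < 8 * (4:ℝ) ^ (a + 2) / (a + 1) := by positivity
    have h4 : (0:ℝ) < 4 / (a + 1) ^ 2 := by positivity
    linarith
  refine ⟨(8 + 8 * (4:ℝ) ^ (a + 2) / (a + 1) + 4 / (a + 1) ^ 2) / c ^ 2,
    div_pos hC (pow_pos hcpos 2), ?_⟩
  intro w hw hInt
  have hEq2 : ∀ x ∈ Set.Ioo (0:ℝ) 1,
      ρ x ^ (β + 2 * (γ - 1)) * (w x ^ 2 + deriv w x ^ 2)
        = c ^ (a + 2) * ((1 - x) ^ (a + 2) * (w x ^ 2 + deriv w x ^ 2)) := by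
    intro x hx
    rw [key1 x hx _, hexp]
    ring
  have hcane : c ^ (a + 2) ≠ 0 := (Real.rpow_pos_of_pos hcpos _).ne'
  have hJ : IntegrableOn (fun x => (1 - x) ^ (a + 2) * (w x ^ 2 + deriv w x ^ 2))
      (Set.Ioo (0:ℝ) 1) := by
    have h1 := hInt.const_mul (c ^ (a + 2))⁻¹
    refine IntegrableOn.congr_fun h1 (fun x hx => ?_) measurableSet_Ioo
    rw [hEq2 x hx, ← mul_assoc, inv_mul_cancel₀ hcane, one_mul]
  have hRHSeq : ∫ x in Set.Ioo (0:ℝ) 1, ρ x ^ (β + 2 * (γ - 1)) * (w x ^ 2 + deriv w x ^ 2)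
      = c ^ (a + 2) * ∫ x in Set.Ioo (0:ℝ) 1, (1 - x) ^ (a + 2) * (w x ^ 2 + deriv w x ^ 2) := by
    rw [← integral_const_mul]
    exact setIntegral_congr_fun measurableSet_Ioo fun x hx => hEq2 x hx
  have hLHSid : ∀ x ∈ Set.Ioo (0:ℝ) 1,
      ρ x ^ β * w x ^ 2 = c ^ a * ((1 - x) ^ a * w x ^ 2) := by
    intro x hx
    have := key1 x hx β
    rw [← hadef] at this
    rw [this]
    ring
  by_cases hfint : IntegrableOn (fun x => (1 - x) ^ a * w x ^ 2) (Set.Ioo (0:ℝ) 1)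
  · have hmain := hardy_aux ha hw hJ hfint
    have hLHSeq : ∫ x in Set.Ioo (0:ℝ) 1, ρ x ^ β * w x ^ 2
        = c ^ a * ∫ x in Set.Ioo (0:ℝ) 1, (1 - x) ^ a * w x ^ 2 := by
      rw [← integral_const_mul]
      exact setIntegral_congr_fun measurableSet_Ioo fun x hx => hLHSid x hx
    rw [hLHSeq, hRHSeq]
    calc c ^ a * ∫ x in Set.Ioo (0:ℝ) 1, (1 - x) ^ a * w x ^ 2
        ≤ c ^ a * ((8 + 8 * (4:ℝ) ^ (a + 2) / (a + 1) + 4 / (a + 1) ^ 2) *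
            ∫ x in Set.Ioo (0:ℝ) 1, (1 - x) ^ (a + 2) * (w x ^ 2 + deriv w x ^ 2)) :=
          mul_le_mul_of_nonneg_left hmain (Real.rpow_nonneg hcpos.le _)
      _ = (8 + 8 * (4:ℝ) ^ (a + 2) / (a + 1) + 4 / (a + 1) ^ 2) / c ^ 2 *
            (c ^ (a + 2) * ∫ x in Set.Ioo (0:ℝ) 1,
              (1 - x) ^ (a + 2) * (w x ^ 2 + deriv w x ^ 2)) := by
          rw [Real.rpow_add hcpos, Real.rpow_two]
          have hcne : c ≠ 0 := hcpos.ne'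
          field_simp
  · have hzero : ∫ x in Set.Ioo (0:ℝ) 1, ρ x ^ β * w x ^ 2 = 0 := by
      apply integral_undef
      intro hcon
      apply hfint
      have hcane2 : c ^ a ≠ 0 := (Real.rpow_pos_of_pos hcpos _).ne'
      have h1 := hcon.const_mul (c ^ a)⁻¹
      refine IntegrableOn.congr_fun h1 (fun x hx => ?_) measurableSet_Ioo
      rw [hLHSid x hx, ← mul_assoc, inv_mul_cancel₀ hcane2, one_mul]
    rw [hzero]
    have hRnonneg : 0 ≤ ∫ x in Set.Ioo (0:ℝ) 1,
        ρ x ^ (β + 2 * (γ - 1)) * (w x ^ 2 + deriv w x ^ 2) := by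
      refine setIntegral_nonneg measurableSet_Ioo fun x hx => ?_
      have hρ0 : 0 ≤ ρ x := by
        rw [hρ x]
        exact Real.rpow_nonneg (mul_nonneg hcpos.le (by linarith [hx.2])) _
      exact mul_nonneg (Real.rpow_nonneg hρ0 _) (by positivity)
    exact mul_nonneg (div_pos hC (pow_pos hcpos 2)).le hRnonneg
end

section
/- (Refined Hardy inequality) Let I = (0,1), γ > 1, ρ̄(x) = ((γ-1)/γ · (1-x))^(1/(γ-1)), and β > -(γ-1). Then there exists a constant C₂ depending only on γ and β such that for any w ∈ H¹_loc(I) with w(0) = 0 and ∫_I ρ̄^(β+2(γ-1)) w_x² dx < ∞, one has ∫_I ρ̄^β w² dx ≤ C₂ ∫_I ρ̄^(β+2(γ-1)) w_x² dx. -/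
open Real MeasureTheory Set
open scoped ENNReal NNReal

lemma hardy_cs_sq (μ : Measure ℝ) {u v : ℝ → ℝ≥0∞} (hu : AEMeasurable u μ)
    (hv : AEMeasurable v μ) :
    (∫⁻ a, u a * v a ∂μ) ^ 2 ≤ (∫⁻ a, u a ^ 2 ∂μ) * (∫⁻ a, v a ^ 2 ∂μ) := by
  have hpq : (2:ℝ).HolderConjugate 2 := Real.HolderConjugate.two_two
  have h := ENNReal.lintegral_mul_le_Lp_mul_Lq μ hpq hu hv
  have h2 : ∀ c : ℝ≥0∞, c ^ (2:ℝ) = c ^ 2 := fun c => by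
    rw [← ENNReal.rpow_natCast]; norm_num
  have h12 : ∀ c : ℝ≥0∞, (c ^ ((2:ℝ)⁻¹)) ^ 2 = c := fun c => by
    rw [← ENNReal.rpow_natCast, ← ENNReal.rpow_mul]; norm_num
  simp only [h2] at h
  calc (∫⁻ a, u a * v a ∂μ) ^ 2
      ≤ ((∫⁻ a, u a ^ 2 ∂μ) ^ ((2:ℝ)⁻¹) * (∫⁻ a, v a ^ 2 ∂μ) ^ ((2:ℝ)⁻¹)) ^ 2 := by
        apply pow_le_pow_left₀ zero_le
        simpa [one_div] using h
    _ = (∫⁻ a, u a ^ 2 ∂μ) * (∫⁻ a, v a ^ 2 ∂μ) := by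
        rw [mul_pow, h12, h12]

lemma lint_ofReal_Ioo {f : ℝ → ℝ} {a b : ℝ} (hab : a ≤ b)
    (hf : IntegrableOn f (Set.Ioo a b)) (h0 : ∀ s ∈ Set.Ioo a b, 0 ≤ f s) :
    ∫⁻ s in Set.Ioo a b, ENNReal.ofReal (f s) = ENNReal.ofReal (∫ s in a..b, f s) := by
  have hnn : 0 ≤ᵐ[(volume : Measure ℝ).restrict (Set.Ioo a b)] f :=
    (ae_restrict_iff' measurableSet_Ioo).2 (Filter.Eventually.of_forall h0)
  rw [intervalIntegral.integral_of_le hab, integral_Ioc_eq_integral_Ioo,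
    ofReal_integral_eq_lintegral_ofReal hf hnn]

lemma rpow_sq_helper {t e : ℝ} (ht : 0 ≤ t) : (t ^ e) ^ 2 = t ^ (2 * e) := by
  rw [← Real.rpow_natCast (t ^ e) 2, ← Real.rpow_mul ht]
  norm_num [mul_comm]

lemma hardy_core (α : ℝ) (hα : -1 < α) (w : ℝ → ℝ) (h0 : w 0 = 0)
    (hc : ContinuousOn w (Set.Ico 0 1)) (hd : DifferentiableOn ℝ w (Set.Ioo 0 1))
    (hi : IntegrableOn (fun x => (1-x) ^ (α+2) * (deriv w x) ^ 2) (Set.Ioo 0 1)) :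
    IntegrableOn (fun x => (1-x) ^ α * (w x) ^ 2) (Set.Ioo 0 1) ∧
    ∫ x in Set.Ioo (0:ℝ) 1, (1-x) ^ α * (w x) ^ 2 ≤
      (4/(α+1)^2) * ∫ x in Set.Ioo (0:ℝ) 1, (1-x) ^ (α+2) * (deriv w x) ^ 2 := by
  set p : ℝ := (α+1)/2 with hpdef
  have hp : 0 < p := by rw [hpdef]; linarith
  have hmw : Measurable (deriv w) := measurable_deriv w
  set G : ℝ → ℝ≥0∞ := fun s => ENNReal.ofReal ((1-s) ^ (p+1) * (deriv w s) ^ 2) with hGdef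
  have hGmeas : Measurable G := by
    apply ENNReal.measurable_ofReal.comp
    fun_prop
  -- integrability of the squared derivative away from 1
  have hw2 : ∀ x ∈ Set.Ioo (0:ℝ) 1, IntegrableOn (fun s => (deriv w s) ^ 2) (Set.Ioo 0 x) := by
    intro x hx
    have hsub : Set.Ioo (0:ℝ) x ⊆ Set.Ioo (0:ℝ) 1 := Set.Ioo_subset_Ioo le_rfl hx.2.le
    have hbig : IntegrableOn
        (fun s => ((1-x) ^ (α+2))⁻¹ * ((1-s) ^ (α+2) * (deriv w s) ^ 2)) (Set.Ioo 0 x) :=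
      (hi.mono_set hsub).const_mul _
    apply hbig.mono' ((hmw.pow_const 2).aestronglyMeasurable)
    refine (ae_restrict_iff' measurableSet_Ioo).2 (Filter.Eventually.of_forall fun s hs => ?_)
    have h1x : (0:ℝ) < 1 - x := by linarith [hx.2]
    have h1s : 1 - x ≤ 1 - s := by linarith [hs.2]
    have hpow : (1-x) ^ (α+2) ≤ (1-s) ^ (α+2) :=
      Real.rpow_le_rpow h1x.le h1s (by linarith)
    have hpx : (0:ℝ) < (1-x) ^ (α+2) := Real.rpow_pos_of_pos h1x _
    rw [Real.norm_eq_abs, abs_of_nonneg (sq_nonneg _)]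
    calc (deriv w s) ^ 2 = ((1-x) ^ (α+2))⁻¹ * ((1-x) ^ (α+2) * (deriv w s) ^ 2) := by
          field_simp
      _ ≤ _ := by
          apply mul_le_mul_of_nonneg_left _ (by positivity)
          exact mul_le_mul_of_nonneg_right hpow (sq_nonneg _)
  -- integrability of the derivative away from 1
  have hw1 : ∀ x ∈ Set.Ioo (0:ℝ) 1, IntegrableOn (deriv w) (Set.Ioo 0 x) := by
    intro x hx
    have hb : IntegrableOn (fun s => 1 + (deriv w s) ^ 2) (Set.Ioo 0 x) :=
      (integrableOn_const measure_Ioo_lt_top.ne).add (hw2 x hx)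
    apply hb.mono' hmw.aestronglyMeasurable
    refine Filter.Eventually.of_forall fun s => ?_
    rw [Real.norm_eq_abs]
    nlinarith [sq_abs (deriv w s), sq_nonneg (|deriv w s| - 1), abs_nonneg (deriv w s)]
  -- FTC
  have hFTC : ∀ x ∈ Set.Ioo (0:ℝ) 1, w x = ∫ s in (0:ℝ)..x, deriv w s := by
    intro x hx
    have hcont : ContinuousOn w (Set.Icc 0 x) :=
      hc.mono (fun s hs => ⟨hs.1, lt_of_le_of_lt hs.2 hx.2⟩)
    have hder : ∀ s ∈ Set.Ioo (0:ℝ) x, HasDerivWithinAt w (deriv w s) (Set.Ioi s) s := by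
      intro s hs
      have hs1 : s ∈ Set.Ioo (0:ℝ) 1 := ⟨hs.1, lt_trans hs.2 hx.2⟩
      exact (((hd s hs1).differentiableAt (isOpen_Ioo.mem_nhds hs1)).hasDerivAt).hasDerivWithinAt
    have hint : IntervalIntegrable (deriv w) volume 0 x := by
      rw [intervalIntegrable_iff_integrableOn_Ioc_of_le hx.1.le, IntegrableOn,
        ← MeasureTheory.restrict_Ioo_eq_restrict_Ioc]
      exact hw1 x hx
    have := intervalIntegral.integral_eq_sub_of_hasDeriv_right_of_le hx.1.le hcont hder hint
    rw [this, h0, sub_zero]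
  -- pointwise bound via Cauchy-Schwarz
  have hpt : ∀ x ∈ Set.Ioo (0:ℝ) 1,
      ENNReal.ofReal ((w x) ^ 2) ≤
        ENNReal.ofReal ((1-x) ^ (-p) / p) * ∫⁻ s in Set.Ioo 0 x, G s := by
    intro x hx
    have h1x : (0:ℝ) < 1 - x := by linarith [hx.2]
    set u : ℝ → ℝ≥0∞ := fun s => ENNReal.ofReal ((1-s) ^ (-((p+1)/2))) with hudef
    set v : ℝ → ℝ≥0∞ := fun s => ENNReal.ofReal ((1-s) ^ ((p+1)/2) * |deriv w s|) with hvdef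
    have humeas : Measurable u := by
      apply ENNReal.measurable_ofReal.comp; fun_prop
    have hvmeas : Measurable v := by
      apply ENNReal.measurable_ofReal.comp
      have : Measurable fun s : ℝ => (1-s) ^ ((p+1)/2) := by fun_prop
      exact this.mul hmw.abs
    have hcs := hardy_cs_sq (volume.restrict (Set.Ioo 0 x)) humeas.aemeasurable hvmeas.aemeasurable
    have hN : ∫⁻ s in Set.Ioo 0 x, u s * v s
        = ∫⁻ s in Set.Ioo 0 x, ENNReal.ofReal |deriv w s| := by
      refine setLIntegral_congr_fun measurableSet_Ioo
        (fun s hs => ?_)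
      have h1s : (0:ℝ) < 1 - s := by linarith [hs.2, hx.2]
      rw [hudef, hvdef]
      rw [← ENNReal.ofReal_mul (Real.rpow_nonneg h1s.le _), ← mul_assoc,
        ← Real.rpow_add h1s]
      norm_num
    have hu2 : ∫⁻ s in Set.Ioo 0 x, u s ^ 2
        = ∫⁻ s in Set.Ioo 0 x, ENNReal.ofReal ((1-s) ^ (-(p+1))) := by
      refine setLIntegral_congr_fun measurableSet_Ioo
        (fun s hs => ?_)
      have h1s : (0:ℝ) < 1 - s := by linarith [hs.2, hx.2]
      rw [hudef, ← ENNReal.ofReal_pow (Real.rpow_nonneg h1s.le _), rpow_sq_helper h1s.le]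
      have h2 : 2 * (-((p+1)/2)) = -(p+1) := by ring
      rw [h2]
    have hv2 : ∫⁻ s in Set.Ioo 0 x, v s ^ 2 = ∫⁻ s in Set.Ioo 0 x, G s := by
      refine setLIntegral_congr_fun measurableSet_Ioo
        (fun s hs => ?_)
      have h1s : (0:ℝ) < 1 - s := by linarith [hs.2, hx.2]
      rw [hvdef, hGdef,
        ← ENNReal.ofReal_pow (mul_nonneg (Real.rpow_nonneg h1s.le _) (abs_nonneg _)),
        mul_pow, rpow_sq_helper h1s.le, sq_abs]
      have h2 : 2 * ((p+1)/2) = p+1 := by ring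
      rw [h2]
    have haint : IntegrableOn (fun s : ℝ => (1-s) ^ (-(p+1))) (Set.Ioo 0 x) := by
      have hcont : ContinuousOn (fun s : ℝ => (1-s) ^ (-(p+1))) (Set.Icc 0 x) := by
        apply ContinuousOn.rpow_const (continuousOn_const.sub continuousOn_id)
        intro s hs
        exact Or.inl (ne_of_gt (by simp only [Pi.sub_apply, id]; linarith [hs.2, hx.2]))
      exact (hcont.integrableOn_compact isCompact_Icc).mono_set Set.Ioo_subset_Icc_self
    have haval : ∫ s in (0:ℝ)..x, (1-s) ^ (-(p+1)) = (1 - (1-x) ^ (-p)) / (-p) := by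
      have h1 : (∫ s in (0:ℝ)..x, (fun u : ℝ => u ^ (-(p+1))) (1 - s))
          = ∫ u in (1-x)..(1-0), (u : ℝ) ^ (-(p+1)) :=
        intervalIntegral.integral_comp_sub_left (fun u : ℝ => u ^ (-(p+1))) 1
      rw [show (1:ℝ) - 0 = 1 by norm_num] at h1
      rw [h1, integral_rpow (Or.inr ⟨by intro hcon; rw [neg_eq_iff_eq_neg] at hcon; linarith [hp],
        Set.notMem_uIcc_of_lt h1x zero_lt_one⟩)]
      have hne : -(p+1) + 1 = -p := by ring
      rw [hne, Real.one_rpow]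
    have ha : ∫⁻ s in Set.Ioo 0 x, ENNReal.ofReal ((1-s) ^ (-(p+1)))
        ≤ ENNReal.ofReal ((1-x) ^ (-p) / p) := by
      rw [lint_ofReal_Ioo hx.1.le haint
        (fun s hs => Real.rpow_nonneg (by linarith [hs.2, hx.2]) _), haval]
      apply ENNReal.ofReal_le_ofReal
      rw [div_neg, ← neg_div, neg_sub]
      gcongr
      linarith
    calc ENNReal.ofReal ((w x) ^ 2)
        ≤ ENNReal.ofReal ((∫ s in (0:ℝ)..x, |deriv w s|) ^ 2) := by
          apply ENNReal.ofReal_le_ofReal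
          have habs : |w x| ≤ ∫ s in (0:ℝ)..x, |deriv w s| := by
            rw [hFTC x hx]
            exact intervalIntegral.abs_integral_le_integral_abs hx.1.le
          calc (w x) ^ 2 = |w x| ^ 2 := (sq_abs _).symm
            _ ≤ _ := pow_le_pow_left₀ (abs_nonneg _) habs 2
      _ = (∫⁻ s in Set.Ioo 0 x, ENNReal.ofReal |deriv w s|) ^ 2 := by
          rw [ENNReal.ofReal_pow (intervalIntegral.integral_nonneg hx.1.le
            (fun s _ => abs_nonneg _)),
            ← lint_ofReal_Ioo hx.1.le ((hw1 x hx).abs) (fun s _ => abs_nonneg _)]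
      _ = (∫⁻ s in Set.Ioo 0 x, u s * v s) ^ 2 := by rw [hN]
      _ ≤ (∫⁻ s in Set.Ioo 0 x, u s ^ 2) * (∫⁻ s in Set.Ioo 0 x, v s ^ 2) := hcs
      _ ≤ ENNReal.ofReal ((1-x) ^ (-p) / p) * ∫⁻ s in Set.Ioo 0 x, G s := by
          rw [hu2, hv2]; exact mul_le_mul_left ha _
  -- main chain
  set H : ℝ → ℝ≥0∞ := fun x => ENNReal.ofReal ((1-x) ^ (p-1) / p) with hHdef
  have hHmeas : Measurable H := by
    apply ENNReal.measurable_ofReal.comp; fun_prop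
  set L : ℝ≥0∞ := ∫⁻ x in Set.Ioo (0:ℝ) 1, ENNReal.ofReal ((1-x) ^ α * (w x) ^ 2) with hLdef
  set R : ℝ≥0∞ := ∫⁻ x in Set.Ioo (0:ℝ) 1,
    ENNReal.ofReal ((1-x) ^ (α+2) * (deriv w x) ^ 2) with hRdef
  have hmain : L ≤ ∫⁻ x in Set.Ioo (0:ℝ) 1, H x * ∫⁻ s in Set.Ioo 0 x, G s := by
    rw [hLdef]
    apply lintegral_mono_ae
    refine (ae_restrict_iff' measurableSet_Ioo).2 (Filter.Eventually.of_forall fun x hx => ?_)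
    have h1x : (0:ℝ) < 1 - x := by linarith [hx.2]
    have hexp : (1-x) ^ α * ((1-x) ^ (-p) / p) = (1-x) ^ (p-1) / p := by
      rw [← mul_div_assoc, ← Real.rpow_add h1x]
      congr 2
      rw [hpdef]; ring
    calc ENNReal.ofReal ((1-x) ^ α * (w x) ^ 2)
        = ENNReal.ofReal ((1-x) ^ α) * ENNReal.ofReal ((w x) ^ 2) :=
          ENNReal.ofReal_mul (Real.rpow_nonneg h1x.le _)
      _ ≤ ENNReal.ofReal ((1-x) ^ α) *
          (ENNReal.ofReal ((1-x) ^ (-p) / p) * ∫⁻ s in Set.Ioo 0 x, G s) :=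
          mul_le_mul_right (hpt x hx) _
      _ = H x * ∫⁻ s in Set.Ioo 0 x, G s := by
          rw [← mul_assoc, ← ENNReal.ofReal_mul (Real.rpow_nonneg h1x.le _), hexp, hHdef]
  have hswap : ∫⁻ x in Set.Ioo (0:ℝ) 1, H x * ∫⁻ s in Set.Ioo 0 x, G s
      = ∫⁻ s in Set.Ioo (0:ℝ) 1, (∫⁻ x in Set.Ioo s 1, H x) * G s := by
    have hS : MeasurableSet {q : ℝ × ℝ | q.2 < q.1} :=
      measurableSet_lt measurable_snd measurable_fst
    set F : ℝ → ℝ → ℝ≥0∞ :=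
      fun x s => ({q : ℝ × ℝ | q.2 < q.1}).indicator (fun q => H q.1 * G q.2) (x, s) with hFdef
    have hFmeas : Measurable (Function.uncurry F) := by
      have hrfl : Function.uncurry F =
          ({q : ℝ × ℝ | q.2 < q.1}).indicator (fun q => H q.1 * G q.2) := rfl
      rw [hrfl]
      exact ((hHmeas.comp measurable_fst).mul (hGmeas.comp measurable_snd)).indicator hS
    have h1 : ∀ x ∈ Set.Ioo (0:ℝ) 1,
        H x * ∫⁻ s in Set.Ioo 0 x, G s = ∫⁻ s in Set.Ioo (0:ℝ) 1, F x s := by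
      intro x hx
      have hxi : F x = (Set.Iio x).indicator (fun s => H x * G s) := by
        funext s
        simp only [hFdef, Set.indicator_apply, Set.mem_setOf_eq, Set.mem_Iio]
      rw [hxi, lintegral_indicator measurableSet_Iio,
        Measure.restrict_restrict measurableSet_Iio]
      have hset : Set.Iio x ∩ Set.Ioo 0 1 = Set.Ioo 0 x := by
        ext s
        simp only [Set.mem_inter_iff, Set.mem_Iio, Set.mem_Ioo]
        constructor
        · rintro ⟨ha, hb, hc⟩; exact ⟨hb, ha⟩
        · rintro ⟨ha, hb⟩; exact ⟨hb, ha, lt_trans hb hx.2⟩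
      rw [hset, ← lintegral_const_mul _ hGmeas]
    have h2 : ∀ s ∈ Set.Ioo (0:ℝ) 1,
        ∫⁻ x in Set.Ioo (0:ℝ) 1, F x s = (∫⁻ x in Set.Ioo s 1, H x) * G s := by
      intro s hs
      have hsi : (fun x => F x s) = (Set.Ioi s).indicator (fun x => H x * G s) := by
        funext x
        simp only [hFdef, Set.indicator_apply, Set.mem_setOf_eq, Set.mem_Ioi]
      rw [hsi, lintegral_indicator measurableSet_Ioi,
        Measure.restrict_restrict measurableSet_Ioi]
      have hset : Set.Ioi s ∩ Set.Ioo 0 1 = Set.Ioo s 1 := by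
        ext x
        simp only [Set.mem_inter_iff, Set.mem_Ioi, Set.mem_Ioo]
        constructor
        · rintro ⟨ha, hb, hc⟩; exact ⟨ha, hc⟩
        · rintro ⟨ha, hb⟩; exact ⟨ha, lt_trans hs.1 ha, hb⟩
      rw [hset, ← lintegral_mul_const _ hHmeas]
    calc ∫⁻ x in Set.Ioo (0:ℝ) 1, H x * ∫⁻ s in Set.Ioo 0 x, G s
        = ∫⁻ x in Set.Ioo (0:ℝ) 1, ∫⁻ s in Set.Ioo (0:ℝ) 1, F x s :=
          setLIntegral_congr_fun measurableSet_Ioo h1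
      _ = ∫⁻ s in Set.Ioo (0:ℝ) 1, ∫⁻ x in Set.Ioo (0:ℝ) 1, F x s :=
          lintegral_lintegral_swap hFmeas.aemeasurable
      _ = ∫⁻ s in Set.Ioo (0:ℝ) 1, (∫⁻ x in Set.Ioo s 1, H x) * G s :=
          setLIntegral_congr_fun measurableSet_Ioo h2
  have hHval : ∀ s ∈ Set.Ioo (0:ℝ) 1, ∫⁻ x in Set.Ioo s 1, H x
      = ENNReal.ofReal ((1-s) ^ p / (p*p)) := by
    intro s hs
    have h1s : (0:ℝ) < 1 - s := by linarith [hs.2]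
    have hint : IntegrableOn (fun x : ℝ => (1-x) ^ (p-1)) (Set.Ioo s 1) := by
      have hII' := (intervalIntegral.intervalIntegrable_rpow' (by linarith : (-1:ℝ) < p - 1)
        (a := 0) (b := 1 - s)).comp_sub_left 1
      have hII : IntervalIntegrable (fun x : ℝ => (1-x) ^ (p-1)) volume 1 s := by
        simpa using hII'
      rw [IntegrableOn, MeasureTheory.restrict_Ioo_eq_restrict_Ioc]
      exact (intervalIntegrable_iff_integrableOn_Ioc_of_le hs.2.le).1 hII.symm
    have hval : ∫ x in s..(1:ℝ), (1-x) ^ (p-1) = (1-s) ^ p / p := by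
      have h1 : (∫ x in s..(1:ℝ), (fun u : ℝ => u ^ (p-1)) (1 - x))
          = ∫ u in (1-(1:ℝ))..(1-s), (u : ℝ) ^ (p-1) :=
        intervalIntegral.integral_comp_sub_left (fun u : ℝ => u ^ (p-1)) 1
      rw [show (1:ℝ) - 1 = 0 by norm_num] at h1
      rw [h1, integral_rpow (Or.inl (by linarith)),
        show p - 1 + 1 = p by ring, Real.zero_rpow (ne_of_gt hp)]
      ring
    have hsplit : ∫⁻ x in Set.Ioo s 1, H x
        = ∫⁻ x in Set.Ioo s 1, ENNReal.ofReal ((1-x) ^ (p-1)) * ENNReal.ofReal (1/p) := by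
      refine setLIntegral_congr_fun measurableSet_Ioo
        (fun x hx => ?_)
      rw [hHdef, ← ENNReal.ofReal_mul (Real.rpow_nonneg (by linarith [hx.2]) _), mul_one_div]
    rw [hsplit, lintegral_mul_const _ (by apply ENNReal.measurable_ofReal.comp; fun_prop),
      lint_ofReal_Ioo hs.2.le hint (fun x hx => Real.rpow_nonneg (by linarith [hx.2]) _), hval,
      ← ENNReal.ofReal_mul (by positivity), div_mul_div_comm, mul_one]
  have hRmeas : Measurable fun x : ℝ => ENNReal.ofReal ((1-x) ^ (α+2) * (deriv w x) ^ 2) := by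
    apply ENNReal.measurable_ofReal.comp
    exact ((by fun_prop : Measurable fun x : ℝ => (1-x) ^ (α+2))).mul (hmw.pow_const 2)
  have hfin : ∫⁻ s in Set.Ioo (0:ℝ) 1, (∫⁻ x in Set.Ioo s 1, H x) * G s
      = ENNReal.ofReal (1/(p*p)) * R := by
    rw [hRdef, ← lintegral_const_mul _ hRmeas]
    refine setLIntegral_congr_fun measurableSet_Ioo
      (fun s hs => ?_)
    have h1s : (0:ℝ) < 1 - s := by linarith [hs.2]
    rw [hHval s hs, hGdef]
    have hmulexp : (1-s) ^ p * (1-s) ^ (p+1) = (1-s) ^ (α+2) := by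
      rw [← Real.rpow_add h1s]
      congr 1
      rw [hpdef]; ring
    rw [← ENNReal.ofReal_mul (by positivity), ← ENNReal.ofReal_mul (by positivity)]
    congr 1
    calc (1-s) ^ p / (p*p) * ((1-s) ^ (p+1) * (deriv w s) ^ 2)
        = ((1-s) ^ p * (1-s) ^ (p+1)) * (deriv w s) ^ 2 / (p*p) := by ring
      _ = 1/(p*p) * ((1-s) ^ (α+2) * (deriv w s) ^ 2) := by rw [hmulexp]; ring
  have hnnR : 0 ≤ᵐ[(volume : Measure ℝ).restrict (Set.Ioo 0 1)]
      fun x => (1-x) ^ (α+2) * (deriv w x) ^ 2 :=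
    (ae_restrict_iff' measurableSet_Ioo).2 (Filter.Eventually.of_forall fun x hx =>
      mul_nonneg (Real.rpow_nonneg (by linarith [hx.2]) _) (sq_nonneg _))
  have hRval : ENNReal.ofReal (∫ x in Set.Ioo (0:ℝ) 1, (1-x) ^ (α+2) * (deriv w x) ^ 2) = R :=
    ofReal_integral_eq_lintegral_ofReal hi hnnR
  have hB : 0 ≤ ∫ x in Set.Ioo (0:ℝ) 1, (1-x) ^ (α+2) * (deriv w x) ^ 2 :=
    setIntegral_nonneg measurableSet_Ioo (fun x hx =>
      mul_nonneg (Real.rpow_nonneg (by linarith [hx.2]) _) (sq_nonneg _))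
  have hL : L ≤ ENNReal.ofReal
      (1/(p*p) * ∫ x in Set.Ioo (0:ℝ) 1, (1-x) ^ (α+2) * (deriv w x) ^ 2) := by
    calc L ≤ ∫⁻ x in Set.Ioo (0:ℝ) 1, H x * ∫⁻ s in Set.Ioo 0 x, G s := hmain
      _ = ENNReal.ofReal (1/(p*p)) * R := by rw [hswap, hfin]
      _ = _ := by rw [← hRval, ← ENNReal.ofReal_mul (by positivity)]
  have hLmeas : AEStronglyMeasurable (fun x => (1-x) ^ α * (w x) ^ 2)
      ((volume : Measure ℝ).restrict (Set.Ioo 0 1)) := by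
    apply ContinuousOn.aestronglyMeasurable _ measurableSet_Ioo
    apply ContinuousOn.mul
    · apply ContinuousOn.rpow_const (continuousOn_const.sub continuousOn_id)
      intro x hx
      exact Or.inl (ne_of_gt (by simp only [Pi.sub_apply, id]; linarith [hx.2]))
    · exact (hc.mono Set.Ioo_subset_Ico_self).pow 2
  have hnnL : 0 ≤ᵐ[(volume : Measure ℝ).restrict (Set.Ioo 0 1)]
      fun x => (1-x) ^ α * (w x) ^ 2 :=
    (ae_restrict_iff' measurableSet_Ioo).2 (Filter.Eventually.of_forall fun x hx =>
      mul_nonneg (Real.rpow_nonneg (by linarith [hx.2]) _) (sq_nonneg _))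
  have hIntL : IntegrableOn (fun x => (1-x) ^ α * (w x) ^ 2) (Set.Ioo 0 1) := by
    refine ⟨hLmeas, ?_⟩
    rw [hasFiniteIntegral_iff_ofReal hnnL]
    exact lt_of_le_of_lt hL ENNReal.ofReal_lt_top
  refine ⟨hIntL, ?_⟩
  have hofreal : ENNReal.ofReal (∫ x in Set.Ioo (0:ℝ) 1, (1-x) ^ α * (w x) ^ 2) = L :=
    ofReal_integral_eq_lintegral_ofReal hIntL hnnL
  have hα1 : α + 1 ≠ 0 := ne_of_gt (by linarith)
  have hAB : ∫ x in Set.Ioo (0:ℝ) 1, (1-x) ^ α * (w x) ^ 2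
      ≤ 1/(p*p) * ∫ x in Set.Ioo (0:ℝ) 1, (1-x) ^ (α+2) * (deriv w x) ^ 2 := by
    rw [← ENNReal.ofReal_le_ofReal_iff (by positivity), hofreal]
    exact hL
  calc ∫ x in Set.Ioo (0:ℝ) 1, (1-x) ^ α * (w x) ^ 2
      ≤ 1/(p*p) * ∫ x in Set.Ioo (0:ℝ) 1, (1-x) ^ (α+2) * (deriv w x) ^ 2 := hAB
    _ = (4/(α+1)^2) * ∫ x in Set.Ioo (0:ℝ) 1, (1-x) ^ (α+2) * (deriv w x) ^ 2 := by
        rw [hpdef]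
        congr 1
        field_simp
        ring

theorem refined_hardy_inequality (γ β : ℝ) (hγ : 1 < γ) (hβ : -(γ - 1) < β)
    (ρ : ℝ → ℝ)
    (hρ : ∀ x, ρ x = ((γ - 1) / γ * (1 - x)) ^ (1 / (γ - 1))) :
    ∃ C₂ : ℝ, 0 < C₂ ∧
      ∀ w : ℝ → ℝ, w 0 = 0 →
        ContinuousOn w (Set.Ico 0 1) →
        DifferentiableOn ℝ w (Set.Ioo 0 1) →
        IntegrableOn
          (fun x => ρ x ^ (β + 2 * (γ - 1)) * (deriv w x) ^ 2) (Set.Ioo 0 1) →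
        ∫ x in Set.Ioo (0 : ℝ) 1, ρ x ^ β * (w x) ^ 2 ≤
          C₂ * ∫ x in Set.Ioo (0 : ℝ) 1,
            ρ x ^ (β + 2 * (γ - 1)) * (deriv w x) ^ 2 := by
  have hγ1 : 0 < γ - 1 := by linarith
  have hγ0 : 0 < γ := by linarith
  set c : ℝ := (γ - 1) / γ with hcdef
  have hc0 : 0 < c := div_pos hγ1 hγ0
  set α : ℝ := β / (γ - 1) with hαdef
  have hα : -1 < α := by
    rw [hαdef, lt_div_iff₀ hγ1]; linarith
  have hα1 : 0 < α + 1 := by linarith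
  have hexp : ∀ e : ℝ, ∀ x ∈ Set.Ioo (0:ℝ) 1,
      ρ x ^ e = c ^ (e/(γ-1)) * (1-x) ^ (e/(γ-1)) := by
    intro e x hx
    have h1x : (0:ℝ) ≤ 1 - x := by linarith [hx.2]
    rw [hρ x, ← Real.rpow_mul (mul_nonneg hc0.le h1x),
      show 1/(γ-1) * e = e/(γ-1) by ring]
    exact Real.mul_rpow hc0.le h1x
  have he1 : β / (γ-1) = α := hαdef.symm
  have he2 : (β + 2*(γ-1)) / (γ-1) = α + 2 := by
    rw [hαdef]; field_simp
  refine ⟨4/((α+1)^2 * c^2), by positivity, fun w h0 hcw hdw hiw => ?_⟩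
  have hca2 : 0 < c ^ (α+2) := Real.rpow_pos_of_pos hc0 _
  have hcα : 0 < c ^ α := Real.rpow_pos_of_pos hc0 _
  have hi' : IntegrableOn (fun x => (1-x) ^ (α+2) * (deriv w x) ^ 2) (Set.Ioo 0 1) := by
    apply MeasureTheory.IntegrableOn.congr_fun (hiw.const_mul ((c ^ (α+2))⁻¹)) _ measurableSet_Ioo
    intro x hx
    simp only
    rw [hexp _ x hx, he2]
    field_simp
  obtain ⟨hIntL, hineq⟩ := hardy_core α hα w h0 hcw hdw hi'
  have hLrw : ∫ x in Set.Ioo (0:ℝ) 1, ρ x ^ β * (w x) ^ 2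
      = c ^ α * ∫ x in Set.Ioo (0:ℝ) 1, (1-x) ^ α * (w x) ^ 2 := by
    rw [← integral_const_mul]
    apply setIntegral_congr_fun measurableSet_Ioo
    intro x hx
    simp only
    rw [hexp β x hx, he1]; ring
  have hRrw : ∫ x in Set.Ioo (0:ℝ) 1, ρ x ^ (β + 2*(γ-1)) * (deriv w x) ^ 2
      = c ^ (α+2) * ∫ x in Set.Ioo (0:ℝ) 1, (1-x) ^ (α+2) * (deriv w x) ^ 2 := by
    rw [← integral_const_mul]
    apply setIntegral_congr_fun measurableSet_Ioo
    intro x hx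
    simp only
    rw [hexp _ x hx, he2]; ring
  rw [hLrw, hRrw]
  have hkey : c ^ (α+2) = c ^ α * c^2 := by
    rw [Real.rpow_add hc0]
    congr 1
    rw [← Real.rpow_natCast c 2]
    norm_num
  calc c ^ α * ∫ x in Set.Ioo (0:ℝ) 1, (1-x) ^ α * (w x) ^ 2
      ≤ c ^ α * ((4/(α+1)^2) * ∫ x in Set.Ioo (0:ℝ) 1, (1-x) ^ (α+2) * (deriv w x) ^ 2) :=
        mul_le_mul_of_nonneg_left hineq hcα.le
    _ = 4/((α+1)^2 * c^2) *
        (c ^ (α+2) * ∫ x in Set.Ioo (0:ℝ) 1, (1-x) ^ (α+2) * (deriv w x) ^ 2) := by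
        rw [hkey]
        field_simp
end

section
/- Let ρ̄ be continuous on [0,1] with ρ̄(x) > 0 for x ∈ [0,1) and ρ̄(1) = 0. Then for every ε > 0 there exists C(ε) > 0 such that for all u ∈ H¹((0,1)): ∫₀¹ u² dx ≤ ε ∫₀¹ u_x² dx + C(ε) ∫₀¹ ρ̄ u² dx. -/
set_option maxHeartbeats 1000000


open Real MeasureTheory

/-- Cauchy–Schwarz type arithmetic: if `S ≤ (t*L + I/t)/2` for all `t > 0`,
with `S, L, I ≥ 0`, then `S^2 ≤ L * I`. -/
lemma weighted_interpolation_cs_aux {S L I : ℝ} (hS : 0 ≤ S) (hL : 0 ≤ L) (hI : 0 ≤ I)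
    (hkey : ∀ t : ℝ, 0 < t → S ≤ (t * L + I / t) / 2) : S ^ 2 ≤ L * I := by
  have h : ∀ t : ℝ, 0 < t → 2 * t * S ≤ t ^ 2 * L + I := by
    intro t ht
    have hk := hkey t ht
    have hc : I / t * t = I := div_mul_cancel₀ I ht.ne'
    nlinarith [mul_le_mul_of_nonneg_left hk ht.le, hc]
  rcases eq_or_lt_of_le hS with hS0 | hSpos
  · rw [← hS0]
    simpa using mul_nonneg hL hI
  rcases eq_or_lt_of_le hL with hL0 | hLpos
  · exfalso
    have ht := h (I / S + 1) (by positivity)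
    have hc : I / S * S = I := div_mul_cancel₀ I hSpos.ne'
    rw [← hL0] at ht
    nlinarith [ht, hc, hSpos, hI]
  · have ht := h (S / L) (div_pos hSpos hLpos)
    have key : (S / L) ^ 2 * L = S ^ 2 / L := by field_simp
    have key2 : S / L * S = S ^ 2 / L := by field_simp
    have h3 : S ^ 2 / L ≤ I := by nlinarith [ht, key, key2]
    rw [mul_comm]
    exact (div_le_iff₀ hLpos).1 h3

theorem weighted_interpolation_inequality (ρ : ℝ → ℝ)
    (hρc : ContinuousOn ρ (Set.Icc 0 1))
    (hρpos : ∀ x ∈ Set.Ico (0 : ℝ) 1, 0 < ρ x)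
    (hρ1 : ρ 1 = 0) :
    ∀ ε : ℝ, 0 < ε → ∃ C : ℝ, 0 < C ∧
      ∀ u : ℝ → ℝ, ContinuousOn u (Set.Icc 0 1) →
        DifferentiableOn ℝ u (Set.Ioo 0 1) →
        IntegrableOn (fun x => (deriv u x) ^ 2) (Set.Ioo 0 1) →
        ∫ x in Set.Ioo (0 : ℝ) 1, (u x) ^ 2 ≤
          ε * ∫ x in Set.Ioo (0 : ℝ) 1, (deriv u x) ^ 2 +
          C * ∫ x in Set.Ioo (0 : ℝ) 1, ρ x * (u x) ^ 2 := by
  intro ε hε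
  set δ : ℝ := min (1/4) (Real.sqrt ε / 2) with hδdef
  have hδpos : 0 < δ := lt_min (by norm_num) (by positivity)
  have hδ4 : δ ≤ 1/4 := min_le_left _ _
  have hδsq : 4 * δ^2 ≤ ε := by
    have h1 : δ ≤ Real.sqrt ε / 2 := min_le_right _ _
    have h2 : δ^2 ≤ (Real.sqrt ε / 2)^2 := by
      apply pow_le_pow_left₀ hδpos.le h1
    have h3 : (Real.sqrt ε)^2 = ε := Real.sq_sqrt hε.le
    nlinarith
  set b : ℝ := 1 - δ with hbdef
  set a : ℝ := 1 - 2*δ with hadef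
  have hab : a < b := by simp only [hadef, hbdef]; linarith
  have ha0 : 0 < a := by simp only [hadef]; linarith
  have hb1 : b < 1 := by simp only [hbdef]; linarith
  have hba : b - a = δ := by simp only [hadef, hbdef]; ring
  have h1b : 1 - b = δ := by simp only [hbdef]; ring
  -- minimum of ρ on [0, b]
  obtain ⟨x₀, hx₀mem, hx₀min⟩ := isCompact_Icc.exists_isMinOn
    (Set.nonempty_Icc.2 (by linarith : (0:ℝ) ≤ b))
    (hρc.mono (Set.Icc_subset_Icc le_rfl hb1.le))
  set m : ℝ := ρ x₀ with hmdef
  have hm : 0 < m := hρpos x₀ ⟨hx₀mem.1, lt_of_le_of_lt hx₀mem.2 hb1⟩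
  clear_value δ a b m
  refine ⟨3 / (m * ε), by positivity, ?_⟩
  intro u hu hud hint
  -- basic integrabilities
  have hu2c : ContinuousOn (fun x => u x ^ 2) (Set.Icc 0 1) := hu.pow 2
  have hu2int : IntegrableOn (fun x => u x ^ 2) (Set.Icc 0 1) :=
    hu2c.integrableOn_Icc
  have hρu2int : IntegrableOn (fun x => ρ x * u x ^ 2) (Set.Icc 0 1) :=
    (hρc.mul hu2c).integrableOn_Icc
  have hIoosub : Set.Ioo (0:ℝ) 1 ⊆ Set.Icc 0 1 := Set.Ioo_subset_Icc_self
  have hρu2nn : ∀ y ∈ Set.Ioo (0:ℝ) 1, 0 ≤ ρ y * u y ^ 2 := fun y hy =>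
    mul_nonneg (hρpos y ⟨hy.1.le, hy.2⟩).le (sq_nonneg _)
  have hIdnn : 0 ≤ ∫ x in Set.Ioo (0:ℝ) 1, (deriv u x) ^ 2 :=
    setIntegral_nonneg measurableSet_Ioo fun _ _ => sq_nonneg _
  -- deriv u is integrable on Ioo 0 1
  have hderivint : IntegrableOn (deriv u) (Set.Ioo 0 1) := by
    apply Integrable.mono' (g := fun x => (1 + (deriv u x)^2)/2)
    · exact ((integrableOn_const measure_Ioo_lt_top.ne).add hint).div_const 2
    · exact (measurable_deriv u).aestronglyMeasurable
    · refine Filter.Eventually.of_forall fun x => ?_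
      have : |deriv u x| ≤ (1 + (deriv u x)^2)/2 := by
        nlinarith [sq_nonneg (|deriv u x| - 1), sq_abs (deriv u x), abs_nonneg (deriv u x)]
      simpa [Real.norm_eq_abs] using this
  -- Step A: m * ∫_{Ioo 0 b} u² ≤ ∫_{Ioo 0 1} ρ u²
  have hsub0b : Set.Ioo (0:ℝ) b ⊆ Set.Ioo 0 1 := Set.Ioo_subset_Ioo le_rfl hb1.le
  have hA1 : m * ∫ x in Set.Ioo (0:ℝ) b, u x ^ 2 ≤ ∫ x in Set.Ioo (0:ℝ) b, ρ x * u x ^ 2 := by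
    rw [← integral_const_mul]
    apply setIntegral_mono_on
    · exact (hu2int.mono_set (hsub0b.trans hIoosub)).const_mul m
    · exact hρu2int.mono_set (hsub0b.trans hIoosub)
    · exact measurableSet_Ioo
    · intro y hy
      have : m ≤ ρ y := by rw [hmdef]; exact hx₀min ⟨hy.1.le, hy.2.le⟩
      exact mul_le_mul_of_nonneg_right this (sq_nonneg _)
  have hA2 : ∫ x in Set.Ioo (0:ℝ) b, ρ x * u x ^ 2 ≤ ∫ x in Set.Ioo (0:ℝ) 1, ρ x * u x ^ 2 := by
    apply setIntegral_mono_set (hρu2int.mono_set hIoosub)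
    · exact (ae_restrict_iff' measurableSet_Ioo).2 (Filter.Eventually.of_forall hρu2nn)
    · exact (Filter.Eventually.of_forall hsub0b).mono fun x h => h
  -- Step C: choose y₀ minimizing u² on [a,b]
  obtain ⟨y₀, hy₀mem, hy₀min⟩ := isCompact_Icc.exists_isMinOn
    (Set.nonempty_Icc.2 hab.le)
    (hu2c.mono (Set.Icc_subset_Icc ha0.le hb1.le))
  have hy₀pos : 0 < y₀ := lt_of_lt_of_le ha0 hy₀mem.1
  have hC : δ * u y₀ ^ 2 ≤ ∫ x in Set.Ioo a b, u x ^ 2 := by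
    have hvol : ∫ _x in Set.Ioo a b, u y₀ ^ 2 = δ * u y₀ ^ 2 := by
      rw [setIntegral_const, measureReal_def, Real.volume_Ioo,
        ENNReal.toReal_ofReal (by linarith : (0:ℝ) ≤ b - a), smul_eq_mul, hba]
    rw [← hvol]
    apply setIntegral_mono_on
    · exact integrableOn_const measure_Ioo_lt_top.ne
    · exact hu2int.mono_set ((Set.Ioo_subset_Icc_self).trans (Set.Icc_subset_Icc ha0.le hb1.le))
    · exact measurableSet_Ioo
    · intro y hy
      exact hy₀min ⟨hy.1.le, hy.2.le⟩
  have hCab : ∫ x in Set.Ioo a b, u x ^ 2 ≤ ∫ x in Set.Ioo (0:ℝ) b, u x ^ 2 := by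
    apply setIntegral_mono_set (hu2int.mono_set (hsub0b.trans hIoosub))
    · exact (ae_restrict_iff' measurableSet_Ioo).2
        (Filter.Eventually.of_forall fun y _ => sq_nonneg _)
    · exact (Filter.Eventually.of_forall (Set.Ioo_subset_Ioo ha0.le le_rfl)).mono fun x h => h
  -- Step D: pointwise bound on [b, 1)
  set Id : ℝ := ∫ x in Set.Ioo (0:ℝ) 1, (deriv u x) ^ 2 with hIddef
  clear_value Id
  have hD : ∀ x ∈ Set.Ico b 1, u x ^ 2 ≤ 2 * u y₀ ^ 2 + 4 * δ * Id := by
    intro x hx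
    have hy₀x : y₀ ≤ x := le_trans hy₀mem.2 hx.1
    have hsubyx : Set.Icc y₀ x ⊆ Set.Ioo 0 1 := fun t ht =>
      ⟨lt_of_lt_of_le hy₀pos ht.1, lt_of_le_of_lt ht.2 hx.2⟩
    have hii : IntervalIntegrable (deriv u) volume y₀ x := by
      apply IntegrableOn.intervalIntegrable
      rw [Set.uIcc_of_le hy₀x]
      exact hderivint.mono_set hsubyx
    have hftc : ∫ t in y₀..x, deriv u t = u x - u y₀ := by
      apply intervalIntegral.integral_eq_sub_of_hasDerivAt
      · intro t ht
        rw [Set.uIcc_of_le hy₀x] at ht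
        exact ((hud t (hsubyx ht)).differentiableAt
          (Ioo_mem_nhds (hsubyx ht).1 (hsubyx ht).2)).hasDerivAt
      · exact hii
    set S : ℝ := ∫ t in Set.Ioo y₀ x, |deriv u t| with hSdef
    set Iloc : ℝ := ∫ t in Set.Ioo y₀ x, (deriv u t) ^ 2 with hIlocdef
    set L : ℝ := x - y₀ with hLdef
    have hL : 0 ≤ L := by simp only [hLdef]; linarith
    have hL2δ : L ≤ 2 * δ := by
      simp only [hLdef]
      have := hy₀mem.1
      have := hx.2
      linarith [hy₀mem.1, hx.2.le]
    have hsubIoo : Set.Ioo y₀ x ⊆ Set.Ioo 0 1 := fun t ht =>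
      hsubyx ⟨ht.1.le, ht.2.le⟩
    have hdint : IntegrableOn (deriv u) (Set.Ioo y₀ x) := hderivint.mono_set hsubIoo
    have hd2int : IntegrableOn (fun t => (deriv u t) ^ 2) (Set.Ioo y₀ x) :=
      hint.mono_set hsubIoo
    have hIlocnn : 0 ≤ Iloc := setIntegral_nonneg measurableSet_Ioo fun _ _ => sq_nonneg _
    have hIlocle : Iloc ≤ Id := by
      rw [hIddef]
      apply setIntegral_mono_set hint
      · exact (ae_restrict_iff' measurableSet_Ioo).2
          (Filter.Eventually.of_forall fun y _ => sq_nonneg _)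
      · exact (Filter.Eventually.of_forall hsubIoo).mono fun t h => h
    have hSnn : 0 ≤ S := setIntegral_nonneg measurableSet_Ioo fun _ _ => abs_nonneg _
    have hdiff : |u x - u y₀| ≤ S := by
      rw [← hftc, intervalIntegral.integral_of_le hy₀x]
      rw [show (∫ t in Set.Ioc y₀ x, deriv u t) = ∫ t in Set.Ioo y₀ x, deriv u t from
        integral_Ioc_eq_integral_Ioo]
      calc |∫ t in Set.Ioo y₀ x, deriv u t| ≤ ∫ t in Set.Ioo y₀ x, |deriv u t| := by
            simpa [Real.norm_eq_abs] using
              norm_integral_le_integral_norm (μ := volume.restrict (Set.Ioo y₀ x)) (deriv u)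
        _ = S := rfl
    have hvolIoo : (volume (Set.Ioo y₀ x)).toReal = L := by
      simp [Real.volume_Ioo, ENNReal.toReal_ofReal (show 0 ≤ x - y₀ by linarith), hLdef]
    -- key inequality: ∀ t > 0, S ≤ (t*L + Iloc/t)/2
    have hkey : ∀ t : ℝ, 0 < t → S ≤ (t * L + Iloc / t) / 2 := by
      intro t ht
      have hle : S ≤ ∫ s in Set.Ioo y₀ x, (t + (deriv u s)^2 / t) / 2 := by
        apply setIntegral_mono_on
        · exact hdint.abs
        · exact ((integrableOn_const measure_Ioo_lt_top.ne).add (hd2int.div_const t)).div_const 2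
        · exact measurableSet_Ioo
        · intro s _
          have heq : (t + (deriv u s)^2 / t) / 2 = (t^2 + (deriv u s)^2) / (2*t) := by
            field_simp
          rw [heq, le_div_iff₀ (by positivity : (0:ℝ) < 2*t)]
          nlinarith [sq_nonneg (t - |deriv u s|), sq_abs (deriv u s)]
      have heq : ∫ s in Set.Ioo y₀ x, (t + (deriv u s)^2 / t) / 2
          = (t * L + Iloc / t) / 2 := by
        rw [integral_div]
        congr 1
        rw [integral_add (μ := volume.restrict (Set.Ioo y₀ x)) (f := fun _ => t) (g := fun s => deriv u s ^ 2 / t) (integrableOn_const measure_Ioo_lt_top.ne : IntegrableOn (fun _ => t) (Set.Ioo y₀ x) volume) (hd2int.div_const t)]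
        rw [integral_div, setIntegral_const, measureReal_def, hvolIoo, smul_eq_mul, hIlocdef]
        ring
      linarith [hle, heq.le, heq.ge]
    clear_value S Iloc L
    have hCS : S ^ 2 ≤ L * Iloc := weighted_interpolation_cs_aux hSnn hL hIlocnn hkey
    -- conclude pointwise bound
    have huxy : (u x - u y₀) ^ 2 ≤ S ^ 2 := by
      have := abs_nonneg (u x - u y₀)
      nlinarith [hdiff, sq_abs (u x - u y₀)]
    have hLI : L * Iloc ≤ 2 * δ * Id := by
      apply mul_le_mul hL2δ hIlocle hIlocnn (by linarith)
    nlinarith [huxy, hCS, hLI, sq_nonneg (u y₀ - (u x - u y₀))]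
  -- Step E: integrate over [b, 1)
  have hE : ∫ x in Set.Ico b 1, u x ^ 2 ≤ δ * (2 * u y₀ ^ 2 + 4 * δ * Id) := by
    have hvol : ∫ _x in Set.Ico b 1, (2 * u y₀ ^ 2 + 4 * δ * Id)
        = δ * (2 * u y₀ ^ 2 + 4 * δ * Id) := by
      rw [setIntegral_const, measureReal_def, Real.volume_Ico,
        ENNReal.toReal_ofReal (by linarith : (0:ℝ) ≤ 1 - b), smul_eq_mul, h1b]
    rw [← hvol]
    apply setIntegral_mono_on
    · exact hu2int.mono_set (Set.Ico_subset_Icc_self.trans (Set.Icc_subset_Icc (by linarith) le_rfl))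
    · exact integrableOn_const measure_Ico_lt_top.ne
    · exact measurableSet_Ico
    · exact hD
  -- split the integral
  have hsplit : ∫ x in Set.Ioo (0:ℝ) 1, u x ^ 2
      = (∫ x in Set.Ioo (0:ℝ) b, u x ^ 2) + ∫ x in Set.Ico b 1, u x ^ 2 := by
    rw [← setIntegral_union]
    · rw [Set.Ioo_union_Ico_eq_Ioo (by linarith : (0:ℝ) < b) hb1.le]
    · rw [Set.disjoint_left]
      rintro x ⟨_, h1⟩ ⟨h2, _⟩
      linarith
    · exact measurableSet_Ico
    · exact hu2int.mono_set (hsub0b.trans hIoosub)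
    · exact hu2int.mono_set
        (Set.Ico_subset_Icc_self.trans (Set.Icc_subset_Icc (by linarith) le_rfl))
  -- combine
  set Iρ : ℝ := ∫ x in Set.Ioo (0:ℝ) 1, ρ x * u x ^ 2 with hIρdef
  set A : ℝ := ∫ x in Set.Ioo (0:ℝ) b, u x ^ 2 with hAdef
  have hAle : A ≤ Iρ / m := by
    rw [le_div_iff₀ hm]
    calc A * m = m * A := by ring
    _ ≤ _ := le_trans hA1 hA2
  have hJle : ∫ x in Set.Ioo a b, u x ^ 2 ≤ Iρ / m := le_trans hCab hAle
  have hEle : ∫ x in Set.Ico b 1, u x ^ 2 ≤ ε * Id + 2 * (Iρ / m) := by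
    have h2 : 2 * (δ * u y₀ ^ 2) ≤ 2 * (Iρ / m) := by
      have := le_trans hC hJle
      linarith
    have h3 : 4 * δ^2 * Id ≤ ε * Id := mul_le_mul_of_nonneg_right hδsq hIdnn
    calc ∫ x in Set.Ico b 1, u x ^ 2 ≤ δ * (2 * u y₀ ^ 2 + 4 * δ * Id) := hE
    _ = 2 * (δ * u y₀ ^ 2) + 4 * δ^2 * Id := by ring
    _ ≤ 2 * (Iρ / m) + ε * Id := by linarith
    _ = ε * Id + 2 * (Iρ / m) := by ring
  rw [hsplit]
  have hRHSeq : (∫ x in Set.Ioo (0:ℝ) 1, ((deriv u x) ^ 2 + 3 / (m * ε) * Iρ))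
      = Id + 3 / (m * ε) * Iρ := by
    rw [hIddef]
    rw [integral_add hint (integrableOn_const measure_Ioo_lt_top.ne),
      setIntegral_const, measureReal_def, Real.volume_Ioo, smul_eq_mul]
    norm_num
  calc A + ∫ x in Set.Ico b 1, u x ^ 2 ≤ ε * Id + 3 / m * Iρ := by
        have h1 : 3 / m * Iρ = 3 * (Iρ / m) := by ring
        linarith [hAle, hEle]
    _ = ε * (Id + 3 / (m * ε) * Iρ) := by
        field_simp
    _ = ε * ∫ x in Set.Ioo (0:ℝ) 1, ((deriv u x) ^ 2 + 3 / (m * ε) * Iρ) := by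
        rw [hRHSeq]
end
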